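/- Let ψ: [0,1] → ℝ be continuous of finite total variation TV(ψ), let 0 ≤ X_1 < X_2 < ⋯ < X_n ≤ 1, let 1 < k < n, and set t_{1k} := X_k − X_1 > 0, t_{1n} := X_n − X_1 > 0. Let H_n denote the empirical distribution function of X_1,…,X_n, H_n(x) := (1/n)#{i : X_i ≤ x}. Then (1/n)·Σ_{i=1}^k ( ψ((X_i − X_1)/t_{1n}) − ψ((X_i − X_1)/t_{1k}) )² ≤ TV(ψ)² · sup_{y ∈ [0,1]} ( H_n(y·t_{1n} + X_1) − H_n((y·t_{1k} + X_1)−) ), where H_n(x−) denotes the left limit. -/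

import Mathlib

open MeasureTheory

lemma chain_sum_le (ψ : ℝ → ℝ) (hψBV : BoundedVariationOn ψ (Set.Icc 0 1))
    (k m : ℕ) (hm : 1 ≤ m) (a b : ℕ → ℝ)
    (hab : ∀ i, 1 ≤ i → i ≤ k → a i ≤ b i)
    (ha0 : ∀ i, 1 ≤ i → i ≤ k → 0 ≤ a i)
    (hb1 : ∀ i, 1 ≤ i → i ≤ k → b i ≤ 1)
    (hgap : ∀ i, 1 ≤ i → i + m ≤ k → b i ≤ a (i + m)) :
    ∑ i ∈ Finset.Icc 1 k, dist (ψ (a i)) (ψ (b i))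
      ≤ m * (eVariationOn ψ (Set.Icc 0 1)).toReal := by
  set a' : ℕ → ℝ := fun i => if i ≤ k then a i else 1 with ha'
  set b' : ℕ → ℝ := fun i => if i ≤ k then b i else 1 with hb'
  -- per-residue chain bound
  have key : ∀ r : ℕ, ∑ t ∈ Finset.range k, dist (ψ (a' (r+1+t*m))) (ψ (b' (r+1+t*m)))
      ≤ (eVariationOn ψ (Set.Icc 0 1)).toReal := by
    intro r
    set u : ℕ → ℝ := fun s => if s % 2 = 0 then a' (r+1+(s/2)*m) else b' (r+1+(s/2)*m) with hu
    have hab' : ∀ j, 1 ≤ j → a' j ≤ b' j := by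
      intro j hj
      by_cases hjk : j ≤ k
      · simp only [ha', hb', if_pos hjk]; exact hab j hj hjk
      · simp only [ha', hb', if_neg hjk]; exact le_refl 1
    have hgap' : ∀ j, 1 ≤ j → b' j ≤ a' (j + m) := by
      intro j hj
      by_cases h1 : j + m ≤ k
      · have hjk : j ≤ k := by omega
        simp only [ha', hb', if_pos h1, if_pos hjk]
        exact hgap j hj h1
      · by_cases hjk : j ≤ k
        · simp only [ha', hb', if_neg h1, if_pos hjk]
          exact hb1 j hj hjk
        · simp only [ha', hb', if_neg h1, if_neg hjk]; exact le_refl 1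
    have humono : Monotone u := by
      apply monotone_nat_of_le_succ
      intro s
      rcases Nat.even_or_odd s with ⟨t, hts⟩ | ⟨t, hts⟩
      · have h1 : s % 2 = 0 := by omega
        have h2 : (s+1) % 2 ≠ 0 := by omega
        have h3 : (s+1)/2 = s/2 := by omega
        simp only [hu, if_pos h1, if_neg h2, h3]
        exact hab' _ (by omega)
      · have h1 : s % 2 ≠ 0 := by omega
        have h2 : (s+1) % 2 = 0 := by omega
        have h3 : (s+1)/2 = s/2 + 1 := by omega
        simp only [hu, if_neg h1, if_pos h2, h3]
        have : r + 1 + (s/2+1) * m = (r + 1 + (s/2) * m) + m := by ring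
        rw [this]
        exact hgap' _ (by omega)
    have humem : ∀ s, u s ∈ Set.Icc (0:ℝ) 1 := by
      intro s
      have : ∀ j, 1 ≤ j → a' j ∈ Set.Icc (0:ℝ) 1 ∧ b' j ∈ Set.Icc (0:ℝ) 1 := by
        intro j hj
        by_cases hjk : j ≤ k
        · simp only [ha', hb', if_pos hjk]
          have := ha0 j hj hjk; have h2 := hab j hj hjk; have h3 := hb1 j hj hjk
          constructor <;> constructor <;> linarith
        · simp only [ha', hb', if_neg hjk]
          constructor <;> constructor <;> norm_num
      rcases this (r+1+(s/2)*m) (by omega) with ⟨h1, h2⟩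
      simp only [hu]
      split <;> assumption
    -- ENNReal chain
    have hsum : ∑ t ∈ Finset.range k, edist (ψ (u (2*t+1))) (ψ (u (2*t)))
        ≤ eVariationOn ψ (Set.Icc 0 1) := by
      calc ∑ t ∈ Finset.range k, edist (ψ (u (2*t+1))) (ψ (u (2*t)))
          = ∑ s ∈ (Finset.range k).image (fun t => 2*t), edist (ψ (u (s+1))) (ψ (u s)) := by
            rw [Finset.sum_image]
            intro x _ y _ h; simp only at h; omega
        _ ≤ ∑ s ∈ Finset.range (2*k), edist (ψ (u (s+1))) (ψ (u s)) := by
            apply Finset.sum_le_sum_of_subset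
            intro s hs
            simp only [Finset.mem_image, Finset.mem_range] at hs ⊢
            obtain ⟨t, ht, rfl⟩ := hs; omega
        _ ≤ eVariationOn ψ (Set.Icc 0 1) := eVariationOn.sum_le (f := ψ) humono humem
    -- convert to real
    have h1 : ∀ t, dist (ψ (a' (r+1+t*m))) (ψ (b' (r+1+t*m)))
        = (edist (ψ (u (2*t+1))) (ψ (u (2*t)))).toReal := by
      intro t
      have e1 : (2*t) % 2 = 0 := by omega
      have e2 : (2*t+1) % 2 ≠ 0 := by omega
      have e3 : (2*t)/2 = t := by omega
      have e4 : (2*t+1)/2 = t := by omega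
      simp only [hu, if_pos e1, if_neg e2, e3, e4]
      rw [edist_dist, ENNReal.toReal_ofReal dist_nonneg, dist_comm]
    calc ∑ t ∈ Finset.range k, dist (ψ (a' (r+1+t*m))) (ψ (b' (r+1+t*m)))
        = (∑ t ∈ Finset.range k, edist (ψ (u (2*t+1))) (ψ (u (2*t)))).toReal := by
          rw [ENNReal.toReal_sum (fun t _ => edist_ne_top _ _)]
          exact Finset.sum_congr rfl fun t _ => h1 t
      _ ≤ (eVariationOn ψ (Set.Icc 0 1)).toReal := ENNReal.toReal_mono hψBV hsum
  -- assemble residues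
  set F : ℕ → ℝ := fun i => dist (ψ (a' i)) (ψ (b' i)) with hF
  have step : ∑ i ∈ Finset.Icc 1 k, F i
      ≤ ∑ r ∈ Finset.range m, ∑ t ∈ Finset.range k, F (r+1+t*m) := by
    rw [Finset.sum_sigma']
    have hinj : ∀ p ∈ (Finset.range m).sigma fun _ => Finset.range k,
        ∀ q ∈ (Finset.range m).sigma fun _ => Finset.range k,
        p.1 + 1 + p.2 * m = q.1 + 1 + q.2 * m → p = q := by
      intro p hp q hq h
      simp only [Finset.mem_sigma, Finset.mem_range] at hp hq
      have h' : p.1 + p.2 * m = q.1 + q.2 * m := by omega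
      have e1 : (p.1 + p.2 * m) % m = p.1 := by
        rw [Nat.add_mul_mod_self_right]; exact Nat.mod_eq_of_lt hp.1
      have e2 : (q.1 + q.2 * m) % m = q.1 := by
        rw [Nat.add_mul_mod_self_right]; exact Nat.mod_eq_of_lt hq.1
      have h1 : p.1 = q.1 := by rw [← e1, ← e2, h']
      have h2 : p.2 = q.2 := by
        have : p.2 * m = q.2 * m := by omega
        exact Nat.eq_of_mul_eq_mul_right (by omega) this
      exact Sigma.ext h1 (heq_of_eq h2)
    calc ∑ i ∈ Finset.Icc 1 k, F i
        ≤ ∑ i ∈ ((Finset.range m).sigma fun _ => Finset.range k).image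
            (fun p => p.1 + 1 + p.2 * m), F i := by
          apply Finset.sum_le_sum_of_subset_of_nonneg
          · intro i hi
            simp only [Finset.mem_Icc] at hi
            simp only [Finset.mem_image]
            refine ⟨⟨(i-1) % m, (i-1)/m⟩, ?_, ?_⟩
            · simp only [Finset.mem_sigma, Finset.mem_range]
              refine ⟨Nat.mod_lt _ (by omega), ?_⟩
              calc (i-1)/m ≤ i-1 := Nat.div_le_self _ _
                _ < k := by omega
            · show (i-1) % m + 1 + (i-1)/m * m = i
              have := Nat.mod_add_div' (i-1) m
              omega
          · intro i _ _; exact dist_nonneg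
      _ = ∑ p ∈ (Finset.range m).sigma fun _ => Finset.range k,
            F (p.1 + 1 + p.2 * m) := Finset.sum_image hinj
  have heqF : ∀ i ∈ Finset.Icc 1 k, dist (ψ (a i)) (ψ (b i)) = F i := by
    intro i hi
    simp only [Finset.mem_Icc] at hi
    simp only [hF, ha', hb', if_pos hi.2]
  calc ∑ i ∈ Finset.Icc 1 k, dist (ψ (a i)) (ψ (b i))
      = ∑ i ∈ Finset.Icc 1 k, F i := Finset.sum_congr rfl heqF
    _ ≤ ∑ r ∈ Finset.range m, ∑ t ∈ Finset.range k, F (r+1+t*m) := step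
    _ ≤ ∑ _r ∈ Finset.range m, (eVariationOn ψ (Set.Icc 0 1)).toReal :=
        Finset.sum_le_sum fun r _ => key r
    _ = m * (eVariationOn ψ (Set.Icc 0 1)).toReal := by
        rw [Finset.sum_const, Finset.card_range, nsmul_eq_mul]

theorem kernel_increment_variance_bound
    (ψ : ℝ → ℝ) (hψc : ContinuousOn ψ (Set.Icc 0 1))
    (hψBV : BoundedVariationOn ψ (Set.Icc 0 1))
    (n : ℕ) (X : ℕ → ℝ)
    (hXmono : ∀ i ∈ Finset.Icc 1 n, ∀ j ∈ Finset.Icc 1 n, i < j → X i < X j)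
    (hX0 : ∀ i ∈ Finset.Icc 1 n, 0 ≤ X i) (hX1 : ∀ i ∈ Finset.Icc 1 n, X i ≤ 1)
    (k : ℕ) (hk1 : 1 < k) (hkn : k < n)
    (t1k t1n : ℝ) (ht1k : t1k = X k - X 1) (ht1n : t1n = X n - X 1)
    (ht1kpos : 0 < t1k) (ht1npos : 0 < t1n)
    (Hn HnLeft : ℝ → ℝ)
    (hHn : ∀ x, Hn x = (((Finset.Icc 1 n).filter (fun i => X i ≤ x)).card : ℝ) / n)
    (hHnLeft : ∀ x, HnLeft x = (((Finset.Icc 1 n).filter (fun i => X i < x)).card : ℝ) / n) :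
    (1 / n : ℝ) * ∑ i ∈ Finset.Icc 1 k,
        (ψ ((X i - X 1) / t1n) - ψ ((X i - X 1) / t1k)) ^ 2
      ≤ (eVariationOn ψ (Set.Icc 0 1)).toReal ^ 2 *
          sSup {v : ℝ | ∃ y ∈ Set.Icc (0 : ℝ) 1,
            v = Hn (y * t1n + X 1) - HnLeft (y * t1k + X 1)} := by
  have hn0 : 0 < n := by omega
  have hnR : (0:ℝ) < n := by exact_mod_cast hn0
  set TV := (eVariationOn ψ (Set.Icc 0 1)).toReal with hTV
  have hTV0 : 0 ≤ TV := ENNReal.toReal_nonneg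
  -- monotonicity of X (non-strict)
  have hXle : ∀ i j, 1 ≤ i → i ≤ j → j ≤ n → X i ≤ X j := by
    intro i j h1 h2 h3
    rcases eq_or_lt_of_le h2 with rfl | h
    · exact le_refl _
    · exact le_of_lt (hXmono i (Finset.mem_Icc.mpr ⟨h1, by omega⟩)
        j (Finset.mem_Icc.mpr ⟨by omega, h3⟩) h)
  have ht1kn : t1k ≤ t1n := by
    rw [ht1k, ht1n]
    have := hXle k n (by omega) (by omega) (le_refl n)
    linarith
  -- intervals
  set a : ℕ → ℝ := fun i => (X i - X 1) / t1n with ha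
  set b : ℕ → ℝ := fun i => (X i - X 1) / t1k with hb
  have hc0 : ∀ i, 1 ≤ i → i ≤ n → 0 ≤ X i - X 1 := by
    intro i h1 h2; have := hXle 1 i (le_refl 1) h1 h2; linarith
  have hck : ∀ i, 1 ≤ i → i ≤ k → X i - X 1 ≤ t1k := by
    intro i h1 h2; rw [ht1k]
    have := hXle i k h1 h2 (by omega); linarith
  have hai0 : ∀ i, 1 ≤ i → i ≤ k → 0 ≤ a i := by
    intro i h1 h2
    exact div_nonneg (hc0 i h1 (by omega)) (le_of_lt ht1npos)
  have hbi1 : ∀ i, 1 ≤ i → i ≤ k → b i ≤ 1 := by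
    intro i h1 h2
    rw [hb]; simp only
    rw [div_le_one ht1kpos]
    exact hck i h1 h2
  have hable : ∀ i, 1 ≤ i → i ≤ k → a i ≤ b i := by
    intro i h1 h2
    rw [ha, hb]; simp only
    rw [div_le_div_iff₀ ht1npos ht1kpos]
    exact mul_le_mul_of_nonneg_left ht1kn (hc0 i h1 (by omega))
  -- multiplicity
  set mult : ℝ → ℕ := fun x => ((Finset.Icc 1 n).filter
    (fun i => x * t1k + X 1 ≤ X i ∧ X i ≤ x * t1n + X 1)).card with hmult
  have hcov : ∀ x : ℝ, ∀ j, 1 ≤ j → j ≤ k → a j ≤ x → x ≤ b j →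
      j ∈ (Finset.Icc 1 n).filter
        (fun i => x * t1k + X 1 ≤ X i ∧ X i ≤ x * t1n + X 1) := by
    intro x j h1 h2 h3 h4
    rw [Finset.mem_filter, Finset.mem_Icc]
    refine ⟨⟨h1, by omega⟩, ?_, ?_⟩
    · rw [hb] at h4; simp only at h4
      rw [le_div_iff₀ ht1kpos] at h4; linarith
    · rw [ha] at h3; simp only at h3
      rw [div_le_iff₀ ht1npos] at h3; linarith
  set m : ℕ := (Finset.Icc 1 k).sup (fun i => mult (a i)) with hm
  have hmle : ∀ i, 1 ≤ i → i ≤ k → mult (a i) ≤ m := by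
    intro i h1 h2
    exact Finset.le_sup (f := fun i => mult (a i)) (Finset.mem_Icc.mpr ⟨h1, h2⟩)
  have hm1 : 1 ≤ m := by
    have h1 : (1:ℕ) ∈ (Finset.Icc 1 n).filter
        (fun i => a 1 * t1k + X 1 ≤ X i ∧ X i ≤ a 1 * t1n + X 1) :=
      hcov (a 1) 1 (le_refl 1) (by omega) (le_refl _) (hable 1 (le_refl 1) (by omega))
    have : 1 ≤ mult (a 1) := Finset.card_pos.mpr ⟨1, h1⟩
    exact le_trans this (hmle 1 (le_refl 1) (by omega))
  -- gap property
  have hgap : ∀ i, 1 ≤ i → i + m ≤ k → b i ≤ a (i + m) := by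
    intro i h1 h2
    by_contra hcon
    push_neg at hcon
    set x := a (i + m) with hx
    have hsub : Finset.Icc i (i + m) ⊆ (Finset.Icc 1 n).filter
        (fun j => x * t1k + X 1 ≤ X j ∧ X j ≤ x * t1n + X 1) := by
      intro j hj
      rw [Finset.mem_Icc] at hj
      apply hcov x j (by omega) (by omega)
      · show (X j - X 1) / t1n ≤ x
        rw [hx]
        show (X j - X 1) / t1n ≤ (X (i + m) - X 1) / t1n
        have := hXle j (i + m) (by omega) (by omega) (by omega)
        gcongr
      · have hbb : b i ≤ b j := by
          show (X i - X 1) / t1k ≤ (X j - X 1) / t1k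
          have := hXle i j h1 (by omega) (by omega)
          gcongr
        linarith
    have hcard : m + 1 ≤ mult x := by
      have hc := Finset.card_le_card hsub
      rw [Nat.card_Icc] at hc
      show m + 1 ≤ (Finset.filter (fun j => x * t1k + X 1 ≤ X j ∧ X j ≤ x * t1n + X 1)
        (Finset.Icc 1 n)).card
      omega
    have : mult x ≤ m := hmle (i + m) (by omega) h2
    omega
  -- bound each increment by TV
  have hamem : ∀ i, 1 ≤ i → i ≤ k → a i ∈ Set.Icc (0:ℝ) 1 := by
    intro i h1 h2
    exact ⟨hai0 i h1 h2, le_trans (hable i h1 h2) (hbi1 i h1 h2)⟩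
  have hbmem : ∀ i, 1 ≤ i → i ≤ k → b i ∈ Set.Icc (0:ℝ) 1 := by
    intro i h1 h2
    exact ⟨le_trans (hai0 i h1 h2) (hable i h1 h2), hbi1 i h1 h2⟩
  have hdistle : ∀ i, 1 ≤ i → i ≤ k → dist (ψ (a i)) (ψ (b i)) ≤ TV := by
    intro i h1 h2
    exact hψBV.dist_le (hamem i h1 h2) (hbmem i h1 h2)
  -- chain bound
  have hchain : ∑ i ∈ Finset.Icc 1 k, dist (ψ (a i)) (ψ (b i)) ≤ m * TV :=
    chain_sum_le ψ hψBV k m hm1 a b hable hai0 hbi1 hgap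
  -- squared bound
  have hsq : ∑ i ∈ Finset.Icc 1 k, (ψ (a i) - ψ (b i)) ^ 2
      ≤ TV * (m * TV) := by
    calc ∑ i ∈ Finset.Icc 1 k, (ψ (a i) - ψ (b i)) ^ 2
        ≤ ∑ i ∈ Finset.Icc 1 k, TV * dist (ψ (a i)) (ψ (b i)) := by
          apply Finset.sum_le_sum
          intro i hi
          rw [Finset.mem_Icc] at hi
          have hd := hdistle i hi.1 hi.2
          have h0 : dist (ψ (a i)) (ψ (b i)) = |ψ (a i) - ψ (b i)| := Real.dist_eq _ _
          have : (ψ (a i) - ψ (b i)) ^ 2 = dist (ψ (a i)) (ψ (b i)) ^ 2 := by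
            rw [h0, sq_abs]
          rw [this, sq]
          exact mul_le_mul_of_nonneg_right hd dist_nonneg
      _ = TV * ∑ i ∈ Finset.Icc 1 k, dist (ψ (a i)) (ψ (b i)) := by
          rw [Finset.mul_sum]
      _ ≤ TV * (m * TV) := mul_le_mul_of_nonneg_left hchain hTV0
  -- sSup lower bound
  set Sset := {v : ℝ | ∃ y ∈ Set.Icc (0 : ℝ) 1,
      v = Hn (y * t1n + X 1) - HnLeft (y * t1k + X 1)} with hSset
  have hbdd : BddAbove Sset := by
    refine ⟨1, ?_⟩
    rintro v ⟨y, hy, rfl⟩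
    have h1 : Hn (y * t1n + X 1) ≤ 1 := by
      rw [hHn]
      rw [div_le_one hnR]
      have := Finset.card_le_card (Finset.filter_subset
        (fun i => X i ≤ y * t1n + X 1) (Finset.Icc 1 n))
      rw [Nat.card_Icc, Nat.add_sub_cancel] at this
      exact_mod_cast this
    have h2 : 0 ≤ HnLeft (y * t1k + X 1) := by
      rw [hHnLeft]
      positivity
    linarith
  -- the value m/n is attained
  have hex : ∃ j ∈ Finset.Icc 1 k, (Finset.Icc 1 k).sup (fun i => mult (a i)) = mult (a j) :=
    Finset.exists_mem_eq_sup _ (Finset.nonempty_Icc.mpr (by omega)) _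
  have hSge : (m : ℝ) / n ≤ sSup Sset := by
    obtain ⟨j, hjmem, hje⟩ := hex
    rw [Finset.mem_Icc] at hjmem
    set y := a j with hy
    set lo := y * t1k + X 1 with hlo
    set hi := y * t1n + X 1 with hhi
    have hy0 : 0 ≤ y := hai0 j hjmem.1 hjmem.2
    have hlohi : lo ≤ hi := by
      rw [hlo, hhi]
      have : y * t1k ≤ y * t1n := mul_le_mul_of_nonneg_left ht1kn hy0
      linarith
    set A := (Finset.Icc 1 n).filter (fun i => X i ≤ hi) with hA
    set B := (Finset.Icc 1 n).filter (fun i => X i < lo) with hB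
    have hBA : B ⊆ A := by
      intro i hi2
      rw [hB, Finset.mem_filter] at hi2
      rw [hA, Finset.mem_filter]
      exact ⟨hi2.1, by linarith [hi2.2]⟩
    have hABdiff : (Finset.Icc 1 n).filter
        (fun i => lo ≤ X i ∧ X i ≤ hi) = A \ B := by
      ext i
      rw [Finset.mem_filter, Finset.mem_sdiff, hA, hB, Finset.mem_filter, Finset.mem_filter]
      constructor
      · rintro ⟨h1, h2, h3⟩
        exact ⟨⟨h1, h3⟩, fun hc => by linarith [hc.2]⟩
      · rintro ⟨⟨h1, h2⟩, h3⟩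
        refine ⟨h1, ?_, h2⟩
        by_contra hc
        exact h3 ⟨h1, by linarith⟩
    have hval : Hn hi - HnLeft lo = (m : ℝ) / n := by
      rw [hHn, hHnLeft]
      have hmv : mult y = m := by rw [hm, hje]
      have : mult y = A.card - B.card := by
        rw [hmult]; simp only
        rw [hABdiff, Finset.card_sdiff_of_subset hBA]
      have hcast : (A.card : ℝ) - B.card = (m : ℝ) := by
        have hle := Finset.card_le_card hBA
        rw [← hmv, this]
        push_cast [Nat.cast_sub hle]
        ring
      rw [div_sub_div_same, hcast]
    have hmem : (m : ℝ) / n ∈ Sset := by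
      refine ⟨y, ?_, hval.symm⟩
      exact hamem j hjmem.1 hjmem.2
    exact le_csSup hbdd hmem
  -- final assembly
  have hfin : (1 / n : ℝ) * ∑ i ∈ Finset.Icc 1 k, (ψ (a i) - ψ (b i)) ^ 2
      ≤ TV ^ 2 * sSup Sset := by
    calc (1 / n : ℝ) * ∑ i ∈ Finset.Icc 1 k, (ψ (a i) - ψ (b i)) ^ 2
        ≤ (1 / n : ℝ) * (TV * (m * TV)) := by
          apply mul_le_mul_of_nonneg_left hsq
          positivity
      _ = TV ^ 2 * ((m : ℝ) / n) := by ring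
      _ ≤ TV ^ 2 * sSup Sset := by
          apply mul_le_mul_of_nonneg_left hSge
          positivity
  exact hfin
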